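/- arXiv:2406.08043 — 3 statements merged into one kernel-verified Lean document; each statement's English description precedes it below -/
import Mathlib

section
/- Let I be a finite set and let μ₁, μ₂ be strictly positive probability measures on the configuration space {0,1}^I (functions I → {0,1}). Suppose that for every j ∈ I and every pair of configurations W, Z with W ≤ Z pointwise, μ₁(W^{j←1})·μ₂(Z^{j←0}) ≤ μ₂(Z^{j←1})·μ₁(W^{j←0}), where X^{j←b} denotes the configuration agreeing with X off j and taking value b at j (equivalently, the conditional μ₁-probability that coordinate j equals 1 given that all other coordinates agree with W is at most the conditional μ₂-probability that coordinate j equals 1 given that all other coordinates agree with Z). Then μ₁ is stochastically dominated by μ₂: there exists a probability measure κ on {0,1}^I × {0,1}^I whose first marginal is μ₁, whose second marginal is μ₂, and which assigns probability 1 to the set of pairs (X,Y) with X ≤ Y pointwise. -/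
open Finset Matrix Function
set_option linter.unusedSectionVars false
set_option linter.unusedVariables false

namespace Holley

variable {I : Type*} [Fintype I] [DecidableEq I]

noncomputable def sden (μ : (I → Bool) → ℝ) (j : I) (x : I → Bool) : ℝ :=
  μ (Function.update x j true) + μ (Function.update x j false)

noncomputable def pup (μ : (I → Bool) → ℝ) (j : I) (x : I → Bool) : ℝ :=
  μ (Function.update x j true) / sden μ j x

def agree (j : I) (x x' : I → Bool) : Prop := ∀ i, i ≠ j → x' i = x i

instance (j : I) (x x' : I → Bool) : Decidable (agree j x x') := by
  unfold agree; infer_instance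

noncomputable def Tmat (μ : (I → Bool) → ℝ) (j : I) : Matrix (I → Bool) (I → Bool) ℝ :=
  fun x x' => if agree j x x' then μ x' / sden μ j x else 0

noncomputable def Pmat (μ : (I → Bool) → ℝ) : Matrix (I → Bool) (I → Bool) ℝ :=
  fun x x' => (Fintype.card I : ℝ)⁻¹ * ∑ j, Tmat μ j x x'

noncomputable def qcoup (p₁ p₂ : ℝ) : Bool → Bool → ℝ
  | true, true => min p₁ p₂
  | false, false => min (1 - p₁) (1 - p₂)
  | true, false => p₁ - min p₁ p₂
  | false, true => p₂ - min p₁ p₂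

noncomputable def Kj (μ₁ μ₂ : (I → Bool) → ℝ) (j : I) :
    Matrix ((I → Bool) × (I → Bool)) ((I → Bool) × (I → Bool)) ℝ :=
  fun z z' => if agree j z.1 z'.1 ∧ agree j z.2 z'.2 then
    qcoup (pup μ₁ j z.1) (pup μ₂ j z.2) (z'.1 j) (z'.2 j) else 0

noncomputable def Kmat (μ₁ μ₂ : (I → Bool) → ℝ) :
    Matrix ((I → Bool) × (I → Bool)) ((I → Bool) × (I → Bool)) ℝ :=
  fun z z' => (Fintype.card I : ℝ)⁻¹ * ∑ j, Kj μ₁ μ₂ j z z'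

section basic
variable {μ : (I → Bool) → ℝ} (hpos : ∀ x, 0 < μ x)

include hpos in
lemma sden_pos (j : I) (x : I → Bool) : 0 < sden μ j x :=
  add_pos (hpos _) (hpos _)

include hpos in
lemma pup_nonneg (j : I) (x : I → Bool) : 0 ≤ pup μ j x :=
  div_nonneg (hpos _).le (sden_pos hpos j x).le

include hpos in
lemma pup_le_one (j : I) (x : I → Bool) : pup μ j x ≤ 1 := by
  rw [pup, div_le_one (sden_pos hpos j x)]
  unfold sden
  nlinarith [hpos (Function.update x j false)]

include hpos in
lemma one_sub_pup (j : I) (x : I → Bool) :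
    μ (Function.update x j false) / sden μ j x = 1 - pup μ j x := by
  have hs := sden_pos hpos j x
  rw [pup, eq_sub_iff_add_eq, ← add_div]
  rw [div_eq_one_iff_eq hs.ne']
  rw [sden, add_comm]

end basic

lemma agree_update (j : I) (x : I → Bool) (b : Bool) : agree j x (Function.update x j b) :=
  fun i hi => Function.update_of_ne hi _ _

lemma agree_eq_update {j : I} {x x' : I → Bool} (h : agree j x x') :
    x' = Function.update x j (x' j) := by
  funext i
  by_cases hi : i = j
  · subst hi; simp
  · rw [Function.update_of_ne hi, h i hi]

lemma update_eq_update_of_agree {j : I} {x x' : I → Bool} (h : agree j x x') (b : Bool) :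
    Function.update x' j b = Function.update x j b := by
  funext i
  by_cases hi : i = j
  · subst hi; simp
  · rw [Function.update_of_ne hi, Function.update_of_ne hi, h i hi]

lemma sden_agree {μ : (I → Bool) → ℝ} {j : I} {x x' : I → Bool} (h : agree j x x') :
    sden μ j x' = sden μ j x := by
  rw [sden, sden, update_eq_update_of_agree h, update_eq_update_of_agree h]

lemma sum_agree (j : I) (x : I → Bool) (f : (I → Bool) → ℝ) :
    ∑ x' : I → Bool, (if agree j x x' then f x' else 0)
      = f (Function.update x j true) + f (Function.update x j false) := by
  have hne : Function.update x j true ≠ Function.update x j false := by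
    intro h
    have := congrFun h j
    simp at this
  rw [← Finset.sum_subset (Finset.subset_univ
      ({Function.update x j true, Function.update x j false} : Finset (I → Bool)))]
  · rw [Finset.sum_pair hne]
    rw [if_pos (agree_update j x true), if_pos (agree_update j x false)]
  · intro x' _ hx'
    rw [if_neg]
    intro hagree
    apply hx'
    rw [agree_eq_update hagree]
    cases x' j <;> simp

section qlem
variable {p₁ p₂ : ℝ}

lemma qcoup_nonneg (h₁ : 0 ≤ p₁) (h₁' : p₁ ≤ 1) (h₂ : 0 ≤ p₂) (h₂' : p₂ ≤ 1) (a b : Bool) :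
    0 ≤ qcoup p₁ p₂ a b := by
  cases a <;> cases b <;> simp only [qcoup] <;> rw [min_def] <;> split_ifs <;> linarith

lemma qcoup_sum_right (a : Bool) :
    qcoup p₁ p₂ a true + qcoup p₁ p₂ a false = if a then p₁ else 1 - p₁ := by
  cases a <;> simp [qcoup] <;>
    rcases le_total p₁ p₂ with h | h <;>
    rw [min_def, min_def] <;> split_ifs <;> linarith

lemma qcoup_sum_left (b : Bool) :
    qcoup p₁ p₂ true b + qcoup p₁ p₂ false b = if b then p₂ else 1 - p₂ := by
  cases b <;> simp [qcoup] <;>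
    rcases le_total p₁ p₂ with h | h <;>
    rw [min_def, min_def] <;> split_ifs <;> linarith

lemma qcoup_tf (h : p₁ ≤ p₂) : qcoup p₁ p₂ true false = 0 := by
  simp [qcoup, min_eq_left h]

end qlem

section Tlem
variable {μ : (I → Bool) → ℝ} (hpos : ∀ x, 0 < μ x)

lemma agree_symm {j : I} {x x' : I → Bool} (h : agree j x x') : agree j x' x :=
  fun i hi => (h i hi).symm

include hpos in
lemma Tmat_nonneg (j : I) (x x' : I → Bool) : 0 ≤ Tmat μ j x x' := by
  rw [Tmat]
  split_ifs
  · exact div_nonneg (hpos _).le (sden_pos hpos j x).le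
  · exact le_rfl


include hpos in
lemma Tmat_rowsum (j : I) (x : I → Bool) : ∑ x' : I → Bool, Tmat μ j x x' = 1 := by
  simp only [Tmat]
  rw [sum_agree j x (fun x' => μ x' / sden μ j x), ← add_div, ← sden,
    div_self (sden_pos hpos j x).ne']

lemma Tmat_rev (j : I) (x x' : I → Bool) :
    μ x * Tmat μ j x x' = μ x' * Tmat μ j x' x := by
  simp only [Tmat]
  by_cases h : agree j x x'
  · rw [if_pos h, if_pos (agree_symm h), sden_agree (agree_symm h) (μ := μ)]
    have : sden μ j x' = sden μ j x := sden_agree h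
    field_simp
  · rw [if_neg h, if_neg (fun h' => h (agree_symm h')), mul_zero, mul_zero]

include hpos in
lemma Pmat_nonneg (x x' : I → Bool) : 0 ≤ Pmat μ x x' :=
  mul_nonneg (by positivity) (Finset.sum_nonneg fun j _ => Tmat_nonneg hpos j x x')

include hpos in
lemma Pmat_rowsum [Nonempty I] (x : I → Bool) : ∑ x' : I → Bool, Pmat μ x x' = 1 := by
  simp only [Pmat]
  rw [← Finset.mul_sum, Finset.sum_comm]
  have : ∀ j ∈ (Finset.univ : Finset I), ∑ x' : I → Bool, Tmat μ j x x' = 1 :=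
    fun j _ => Tmat_rowsum hpos j x
  rw [Finset.sum_congr rfl this, Finset.sum_const, Finset.card_univ, nsmul_eq_mul, mul_one,
    inv_mul_cancel₀]
  exact_mod_cast Fintype.card_pos.ne'

lemma Pmat_rev (x x' : I → Bool) : μ x * Pmat μ x x' = μ x' * Pmat μ x' x := by
  have key : (∑ j, μ x * Tmat μ j x x') = ∑ j, μ x' * Tmat μ j x' x :=
    Finset.sum_congr rfl fun j _ => Tmat_rev (μ := μ) j x x'
  simp only [Pmat]
  rw [mul_left_comm, mul_left_comm (μ x')]
  congr 1
  rw [Finset.mul_sum, Finset.mul_sum, key]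

include hpos in
lemma Pmat_stationary [Nonempty I] (x' : I → Bool) :
    ∑ x : I → Bool, μ x * Pmat μ x x' = μ x' := by
  have : ∀ x ∈ (Finset.univ : Finset (I → Bool)),
      μ x * Pmat μ x x' = μ x' * Pmat μ x' x := fun x _ => Pmat_rev x x'
  rw [Finset.sum_congr rfl this, ← Finset.mul_sum, Pmat_rowsum hpos x', mul_one]

include hpos in
lemma Pmat_pos_of_agree [Nonempty I] {j : I} {x x' : I → Bool} (h : agree j x x') :
    0 < Pmat μ x x' := by
  apply mul_pos
  · rw [inv_pos]
    exact_mod_cast Fintype.card_pos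
  · apply Finset.sum_pos' (fun i _ => Tmat_nonneg hpos i x x')
    refine ⟨j, Finset.mem_univ j, ?_⟩
    rw [Tmat, if_pos h]
    exact div_pos (hpos _) (sden_pos hpos j x)

include hpos in
lemma Pmat_pow_nonneg (m : ℕ) (x x' : I → Bool) : 0 ≤ (Pmat μ ^ m) x x' := by
  induction m generalizing x x' with
  | zero => rw [pow_zero, Matrix.one_apply]; split_ifs <;> norm_num
  | succ m ih =>
    rw [pow_succ, Matrix.mul_apply]
    exact Finset.sum_nonneg fun z _ => mul_nonneg (ih x z) (Pmat_nonneg hpos z x')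

include hpos in
lemma Pmat_pow_rowsum [Nonempty I] (m : ℕ) (x : I → Bool) :
    ∑ x' : I → Bool, (Pmat μ ^ m) x x' = 1 := by
  induction m generalizing x with
  | zero => simp [Matrix.one_apply]
  | succ m ih =>
    simp only [pow_succ, Matrix.mul_apply]
    rw [Finset.sum_comm]
    have : ∀ z ∈ (Finset.univ : Finset (I → Bool)),
        ∑ x' : I → Bool, (Pmat μ ^ m) x z * Pmat μ z x'
          = (Pmat μ ^ m) x z := by
      intro z _
      rw [← Finset.mul_sum, Pmat_rowsum hpos z, mul_one]
    rw [Finset.sum_congr rfl this, ih x]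

include hpos in
lemma Pmat_pow_pos [Nonempty I] (m : ℕ) (x x' : I → Bool)
    (h : (Finset.univ.filter fun i => x i ≠ x' i).card ≤ m) :
    0 < (Pmat μ ^ m) x x' := by
  induction m generalizing x x' with
  | zero =>
    have hempty : (Finset.univ.filter fun i => x i ≠ x' i) = ∅ :=
      Finset.card_eq_zero.mp (Nat.le_zero.mp h)
    have hxx : x = x' := by
      funext i
      by_contra hi
      have : i ∈ Finset.univ.filter fun i => x i ≠ x' i :=
        Finset.mem_filter.mpr ⟨Finset.mem_univ i, hi⟩
      simp [hempty] at this
    subst hxx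
    rw [pow_zero, Matrix.one_apply_eq]
    norm_num
  | succ m ih =>
    rw [pow_succ', Matrix.mul_apply]
    apply Finset.sum_pos'
      (fun z _ => mul_nonneg (Pmat_nonneg hpos x z) (Pmat_pow_nonneg hpos m z x'))
    by_cases hxx : x = x'
    · subst hxx
      refine ⟨x, Finset.mem_univ x, mul_pos ?_ (ih x x ?_)⟩
      · exact Pmat_pos_of_agree hpos (j := Classical.arbitrary I) (fun i _ => rfl)
      · simp
    · obtain ⟨j, hj⟩ := Function.ne_iff.mp hxx
      set z := Function.update x j (x' j) with hz
      refine ⟨z, Finset.mem_univ z, mul_pos (Pmat_pos_of_agree hpos (agree_update j x _))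
        (ih z x' ?_)⟩
      have hsub : (Finset.univ.filter fun i => z i ≠ x' i)
          ⊆ (Finset.univ.filter fun i => x i ≠ x' i).erase j := by
        intro i hi
        rw [Finset.mem_filter] at hi
        have hij : i ≠ j := by
          intro he
          subst he
          apply hi.2
          rw [hz, Function.update_self]
        refine Finset.mem_erase.mpr ⟨hij, Finset.mem_filter.mpr ⟨Finset.mem_univ i, ?_⟩⟩
        have : z i = x i := Function.update_of_ne hij _ _
        rw [← this]
        exact hi.2
      have hjmem : j ∈ Finset.univ.filter fun i => x i ≠ x' i :=
        Finset.mem_filter.mpr ⟨Finset.mem_univ j, hj⟩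
      calc (Finset.univ.filter fun i => z i ≠ x' i).card
          ≤ ((Finset.univ.filter fun i => x i ≠ x' i).erase j).card :=
            Finset.card_le_card hsub
        _ = (Finset.univ.filter fun i => x i ≠ x' i).card - 1 :=
            Finset.card_erase_of_mem hjmem
        _ ≤ m := by omega

end Tlem

section generic
variable {N : Type*} [Fintype N] [DecidableEq N]

lemma harmonic_pow (P : Matrix N N ℝ) (h : N → ℝ)
    (hh : ∀ y, ∑ x, P y x * h x = h y) (m : ℕ) :
    ∀ y, ∑ x, (P ^ m) y x * h x = h y := by
  induction m with
  | zero => intro y; simp [Matrix.one_apply]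
  | succ m ih =>
    intro y
    simp only [pow_succ', Matrix.mul_apply, Finset.sum_mul]
    rw [Finset.sum_comm]
    have : ∀ z ∈ (Finset.univ : Finset N),
        ∑ x, P y z * (P ^ m) z x * h x = P y z * h z := by
      intro z _
      rw [← ih z, Finset.mul_sum]
      exact Finset.sum_congr rfl fun x _ => by ring
    rw [Finset.sum_congr rfl this, hh y]

lemma harmonic_const [Nonempty N] (Q : Matrix N N ℝ) (hQpos : ∀ x y, 0 < Q x y)
    (hQrow : ∀ x, ∑ y, Q x y = 1)
    (h : N → ℝ) (hh : ∀ y, ∑ x, Q y x * h x = h y) : ∀ x y, h x = h y := by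
  obtain ⟨y₀, -, hy₀⟩ := Finset.exists_max_image (Finset.univ : Finset N) h
    Finset.univ_nonempty
  have key : ∀ x, h x = h y₀ := by
    intro x
    by_contra hx
    have hlt : h x < h y₀ := lt_of_le_of_ne (hy₀ x (Finset.mem_univ x)) hx
    have : ∑ z, Q y₀ z * h z < ∑ z, Q y₀ z * h y₀ := by
      apply Finset.sum_lt_sum
      · exact fun z _ => mul_le_mul_of_nonneg_left (hy₀ z (Finset.mem_univ z))
          (hQpos y₀ z).le
      · exact ⟨x, Finset.mem_univ x, mul_lt_mul_of_pos_left hlt (hQpos y₀ x)⟩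
    rw [hh y₀, ← Finset.sum_mul, hQrow y₀, one_mul] at this
    exact lt_irrefl _ this
  intro x y
  rw [key x, key y]

lemma exists_stationary (K : Matrix N N ℝ) (hK0 : ∀ z z', 0 ≤ K z z')
    (hK1 : ∀ z, ∑ z', K z z' = 1) (v₀ : N → ℝ) (hv₀ : v₀ ∈ stdSimplex ℝ N) :
    ∃ κ ∈ stdSimplex ℝ N, (∀ z', ∑ z, κ z * K z z' = κ z') ∧
      ∀ z, (∀ m : ℕ, Matrix.vecMul v₀ (K ^ m) z = 0) → κ z = 0 := by
  set v : ℕ → N → ℝ := fun m => Matrix.vecMul v₀ (K ^ m) with hvdef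
  have hvm : ∀ (w : N → ℝ) (z : N), Matrix.vecMul w K z = ∑ x, w x * K x z := by
    intro w z
    simp [Matrix.vecMul, dotProduct]
  have hv_succ : ∀ m, v (m + 1) = Matrix.vecMul (v m) K := by
    intro m
    show v₀ ᵥ* K ^ (m + 1) = (v₀ ᵥ* K ^ m) ᵥ* K
    rw [pow_succ, ← Matrix.vecMul_vecMul]
  have hstep : ∀ w : N → ℝ, w ∈ stdSimplex ℝ N → Matrix.vecMul w K ∈ stdSimplex ℝ N := by
    intro w hw
    refine ⟨fun z => ?_, ?_⟩
    · rw [hvm]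
      exact Finset.sum_nonneg fun x _ => mul_nonneg (hw.1 x) (hK0 x z)
    · have : ∀ z ∈ (Finset.univ : Finset N),
          Matrix.vecMul w K z = ∑ x, w x * K x z := fun z _ => hvm w z
      rw [Finset.sum_congr rfl this, Finset.sum_comm]
      have : ∀ x ∈ (Finset.univ : Finset N), ∑ z, w x * K x z = w x := by
        intro x _
        rw [← Finset.mul_sum, hK1 x, mul_one]
      rw [Finset.sum_congr rfl this, hw.2]
  have hv : ∀ m, v m ∈ stdSimplex ℝ N := by
    intro m
    induction m with
    | zero => simpa [hvdef, Matrix.vecMul_one] using hv₀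
    | succ m ih =>
      rw [hv_succ]
      exact hstep _ ih
  set c : ℕ → N → ℝ := fun m z => ((m : ℝ) + 1)⁻¹ * ∑ k ∈ Finset.range (m + 1), v k z
    with hcdef
  have hmne : ∀ m : ℕ, ((m : ℝ) + 1) ≠ 0 := fun m => by positivity
  have hc : ∀ m, c m ∈ stdSimplex ℝ N := by
    intro m
    refine ⟨fun z => mul_nonneg (by positivity)
      (Finset.sum_nonneg fun k _ => (hv k).1 z), ?_⟩
    show (∑ z, ((m : ℝ) + 1)⁻¹ * ∑ k ∈ Finset.range (m + 1), v k z) = 1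
    rw [← Finset.mul_sum, Finset.sum_comm]
    have : ∀ k ∈ Finset.range (m + 1), ∑ z, v k z = 1 := fun k _ => (hv k).2
    rw [Finset.sum_congr rfl this, Finset.sum_const, Finset.card_range, nsmul_eq_mul,
      mul_one]
    push_cast
    rw [inv_mul_cancel₀ (hmne m)]
  obtain ⟨κ, hκs, φ, hφ, hlim⟩ := (isCompact_stdSimplex ℝ N).tendsto_subseq hc
  have hcoord : ∀ z, Filter.Tendsto (fun m => c (φ m) z) Filter.atTop (nhds (κ z)) :=
    fun z => ((continuous_apply z).tendsto κ).comp hlim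
  have hkey : ∀ (m : ℕ) (z' : N), (∑ z, c m z * K z z')
      = c m z' + ((m : ℝ) + 1)⁻¹ * (v (m + 1) z' - v 0 z') := by
    intro m z'
    have h1 : (∑ z, c m z * K z z')
        = ((m : ℝ) + 1)⁻¹ * ∑ k ∈ Finset.range (m + 1), v (k + 1) z' := by
      have e1 : ∀ z ∈ (Finset.univ : Finset N), c m z * K z z'
          = ((m : ℝ) + 1)⁻¹ * ∑ k ∈ Finset.range (m + 1), v k z * K z z' := by
        intro z _
        show (((m : ℝ) + 1)⁻¹ * ∑ k ∈ Finset.range (m + 1), v k z) * K z z' = _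
        rw [mul_assoc, Finset.sum_mul]
      rw [Finset.sum_congr rfl e1, ← Finset.mul_sum, Finset.sum_comm]
      congr 1
      refine Finset.sum_congr rfl fun k _ => ?_
      rw [← hvm (v k) z', ← hv_succ k]
    have h2 : ∑ k ∈ Finset.range (m + 1), v (k + 1) z'
        = (∑ k ∈ Finset.range (m + 1), v k z') + v (m + 1) z' - v 0 z' := by
      have ha := Finset.sum_range_succ (fun k => v k z') (m + 1)
      have hb := Finset.sum_range_succ' (fun k => v k z') (m + 1)
      linarith
    rw [h1, h2]
    show _ = (((m : ℝ) + 1)⁻¹ * ∑ k ∈ Finset.range (m + 1), v k z') + _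
    ring
  have hbd : ∀ (m : ℕ) (z : N), v m z ≤ 1 := by
    intro m z
    calc v m z ≤ ∑ z', v m z' :=
          Finset.single_le_sum (fun z' _ => (hv m).1 z') (Finset.mem_univ z)
      _ = 1 := (hv m).2
  have hφtop : Filter.Tendsto φ Filter.atTop Filter.atTop := hφ.tendsto_atTop
  have l1 : Filter.Tendsto (fun m : ℕ => ((m : ℝ) + 1)⁻¹) Filter.atTop (nhds 0) := by
    simpa only [one_div] using tendsto_one_div_add_atTop_nhds_zero_nat (𝕜 := ℝ)
  have herr : ∀ z' : N, Filter.Tendsto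
      (fun m => ((φ m : ℝ) + 1)⁻¹ * (v (φ m + 1) z' - v 0 z')) Filter.atTop (nhds 0) := by
    intro z'
    apply squeeze_zero_norm (a := fun m => ((φ m : ℝ) + 1)⁻¹ * 2)
    · intro m
      rw [Real.norm_eq_abs, abs_mul, abs_of_nonneg (by positivity :
        (0:ℝ) ≤ ((φ m : ℝ) + 1)⁻¹)]
      have h1 := (hv (φ m + 1)).1 z'
      have h2 := (hv 0).1 z'
      have h3 := hbd (φ m + 1) z'
      have h4 := hbd 0 z'
      have : |v (φ m + 1) z' - v 0 z'| ≤ 2 := by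
        rw [abs_le]
        constructor <;> linarith
      have hnn : (0:ℝ) ≤ ((φ m : ℝ) + 1)⁻¹ := by positivity
      exact mul_le_mul_of_nonneg_left this hnn
    · have := (l1.comp hφtop).mul_const 2
      simpa using this
  refine ⟨κ, hκs, ?_, ?_⟩
  · intro z'
    have t1 : Filter.Tendsto (fun m => ∑ z, c (φ m) z * K z z') Filter.atTop
        (nhds (∑ z, κ z * K z z')) :=
      tendsto_finset_sum _ fun z _ => (hcoord z).mul_const (K z z')
    have t2 : Filter.Tendsto (fun m => ∑ z, c (φ m) z * K z z') Filter.atTop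
        (nhds (κ z')) := by
      have heq : (fun m => ∑ z, c (φ m) z * K z z')
          = fun m => c (φ m) z' + ((φ m : ℝ) + 1)⁻¹ * (v (φ m + 1) z' - v 0 z') :=
        funext fun m => hkey (φ m) z'
      rw [heq]
      simpa using (hcoord z').add (herr z')
    exact tendsto_nhds_unique t1 t2
  · intro z hz
    have hz' : ∀ m, v m z = 0 := hz
    have hc0 : ∀ m, c m z = 0 := by
      intro m
      show ((m : ℝ) + 1)⁻¹ * ∑ k ∈ Finset.range (m + 1), v k z = 0
      rw [Finset.sum_eq_zero fun k _ => hz' k, mul_zero]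
    have : Filter.Tendsto (fun m => c (φ m) z) Filter.atTop (nhds 0) := by
      simpa [funext fun m => hc0 (φ m)] using
        (tendsto_const_nhds : Filter.Tendsto (fun _ : ℕ => (0:ℝ)) Filter.atTop (nhds 0))
    exact (tendsto_nhds_unique (hcoord z) this)

end generic

lemma stationary_eq [Nonempty I] (μ : (I → Bool) → ℝ) (hpos : ∀ x, 0 < μ x)
    (hsum : ∑ x : I → Bool, μ x = 1) (π : (I → Bool) → ℝ)
    (hstat : ∀ y, ∑ x : I → Bool, π x * Pmat μ x y = π y)
    (hπsum : ∑ x : I → Bool, π x = 1) : π = μ := by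
  set h : (I → Bool) → ℝ := fun x => π x / μ x with hh
  have hharm : ∀ y, ∑ x : I → Bool, Pmat μ y x * h x = h y := by
    intro y
    have : ∀ x ∈ (Finset.univ : Finset (I → Bool)),
        Pmat μ y x * h x = π x * Pmat μ x y / μ y := by
      intro x _
      have hrev := Pmat_rev (μ := μ) y x
      have hx := (hpos x).ne'
      have hy := (hpos y).ne'
      have hPyx : Pmat μ y x = μ x * Pmat μ x y / μ y := by
        rw [eq_div_iff hy]
        linear_combination hrev
      show Pmat μ y x * (π x / μ x) = π x * Pmat μ x y / μ y
      rw [hPyx]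
      field_simp
    rw [Finset.sum_congr rfl this, ← Finset.sum_div, hstat y]
  have hpow := harmonic_pow (Pmat μ) h hharm (Fintype.card I)
  have hconst : ∀ x y : I → Bool, h x = h y := by
    apply harmonic_const (Pmat μ ^ Fintype.card I)
    · intro x y
      apply Pmat_pow_pos hpos
      calc (Finset.univ.filter fun i => x i ≠ y i).card
          ≤ (Finset.univ : Finset I).card := Finset.card_le_card (Finset.filter_subset _ _)
        _ = Fintype.card I := Finset.card_univ
    · exact Pmat_pow_rowsum hpos (Fintype.card I)
    · exact hpow
  funext x
  have hπx : ∀ y : I → Bool, π y = h x * μ y := by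
    intro y
    rw [hconst x y]
    show π y = π y / μ y * μ y
    rw [div_mul_cancel₀ _ (hpos y).ne']
  have hsums : ∑ y : I → Bool, π y = h x * ∑ y : I → Bool, μ y := by
    rw [Finset.mul_sum]
    exact Finset.sum_congr rfl fun y _ => hπx y
  rw [hπsum, hsum, mul_one] at hsums
  have hx1 : h x = 1 := hsums.symm
  rw [hπx x, hx1, one_mul]

section Klem
variable {μ₁ μ₂ : (I → Bool) → ℝ} (h₁pos : ∀ x, 0 < μ₁ x) (h₂pos : ∀ x, 0 < μ₂ x)

include h₁pos h₂pos in
lemma Kj_nonneg (j : I) (z z' : (I → Bool) × (I → Bool)) : 0 ≤ Kj μ₁ μ₂ j z z' := by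
  rw [Kj]
  split_ifs
  · exact qcoup_nonneg (pup_nonneg h₁pos j z.1) (pup_le_one h₁pos j z.1)
      (pup_nonneg h₂pos j z.2) (pup_le_one h₂pos j z.2) _ _
  · exact le_rfl

include h₁pos in
lemma Kj_marg1 (j : I) (z : (I → Bool) × (I → Bool)) (x' : I → Bool) :
    ∑ y' : I → Bool, Kj μ₁ μ₂ j z (x', y') = Tmat μ₁ j z.1 x' := by
  set p₁ := pup μ₁ j z.1 with hp₁
  set p₂ := pup μ₂ j z.2 with hp₂
  by_cases hA : agree j z.1 x'
  · have e1 : ∀ y' ∈ (Finset.univ : Finset (I → Bool)), Kj μ₁ μ₂ j z (x', y')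
        = if agree j z.2 y' then (fun w => qcoup p₁ p₂ (x' j) (w j)) y' else 0 := by
      intro y' _
      rw [Kj]
      by_cases hB : agree j z.2 y' <;> simp [hA, hB, hp₁, hp₂]
    rw [Finset.sum_congr rfl e1, sum_agree j z.2 (fun w => qcoup p₁ p₂ (x' j) (w j))]
    simp only [Function.update_self]
    rw [qcoup_sum_right]
    rw [Tmat, if_pos hA]
    have hx' : x' = Function.update z.1 j (x' j) := agree_eq_update hA
    cases hxj : x' j
    · rw [if_neg (by simp)]
      rw [hx', hxj, one_sub_pup h₁pos j z.1]
    · rw [if_pos (by simp)]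
      rw [hx', hxj, hp₁, pup]
  · rw [Tmat, if_neg hA]
    apply Finset.sum_eq_zero
    intro y' _
    rw [Kj, if_neg]
    tauto

include h₂pos in
lemma Kj_marg2 (j : I) (z : (I → Bool) × (I → Bool)) (y' : I → Bool) :
    ∑ x' : I → Bool, Kj μ₁ μ₂ j z (x', y') = Tmat μ₂ j z.2 y' := by
  set p₁ := pup μ₁ j z.1 with hp₁
  set p₂ := pup μ₂ j z.2 with hp₂
  by_cases hB : agree j z.2 y'
  · have e1 : ∀ x' ∈ (Finset.univ : Finset (I → Bool)), Kj μ₁ μ₂ j z (x', y')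
        = if agree j z.1 x' then (fun w => qcoup p₁ p₂ (w j) (y' j)) x' else 0 := by
      intro x' _
      rw [Kj]
      by_cases hA : agree j z.1 x' <;> simp [hA, hB, hp₁, hp₂]
    rw [Finset.sum_congr rfl e1, sum_agree j z.1 (fun w => qcoup p₁ p₂ (w j) (y' j))]
    simp only [Function.update_self]
    rw [qcoup_sum_left]
    rw [Tmat, if_pos hB]
    have hy' : y' = Function.update z.2 j (y' j) := agree_eq_update hB
    cases hyj : y' j
    · rw [if_neg (by simp)]
      rw [hy', hyj, one_sub_pup h₂pos j z.2]
    · rw [if_pos (by simp)]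
      rw [hy', hyj, hp₂, pup]
  · rw [Tmat, if_neg hB]
    apply Finset.sum_eq_zero
    intro x' _
    rw [Kj, if_neg]
    tauto

include h₁pos h₂pos in
lemma pup_le_pup
    (hcond : ∀ (j : I) (W Z : I → Bool), (∀ i, W i ≤ Z i) →
      μ₁ (Function.update W j true) * μ₂ (Function.update Z j false) ≤
      μ₂ (Function.update Z j true) * μ₁ (Function.update W j false))
    (j : I) {x y : I → Bool} (hxy : ∀ i, x i ≤ y i) :
    pup μ₁ j x ≤ pup μ₂ j y := by
  rw [pup, pup, div_le_div_iff₀ (sden_pos h₁pos j x) (sden_pos h₂pos j y)]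
  rw [sden, sden]
  nlinarith [hcond j x y hxy, (h₁pos (Function.update x j true)).le,
    (h₂pos (Function.update y j true)).le]

include h₁pos h₂pos in
lemma Kj_mono
    (hcond : ∀ (j : I) (W Z : I → Bool), (∀ i, W i ≤ Z i) →
      μ₁ (Function.update W j true) * μ₂ (Function.update Z j false) ≤
      μ₂ (Function.update Z j true) * μ₁ (Function.update W j false))
    (j : I) {z z' : (I → Bool) × (I → Bool)} (hz : ∀ i, z.1 i ≤ z.2 i)
    (hne : Kj μ₁ μ₂ j z z' ≠ 0) : ∀ i, z'.1 i ≤ z'.2 i := by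
  have hIf : agree j z.1 z'.1 ∧ agree j z.2 z'.2 := by
    by_contra hcc
    rw [Kj, if_neg hcc] at hne
    exact hne rfl
  have hq : qcoup (pup μ₁ j z.1) (pup μ₂ j z.2) (z'.1 j) (z'.2 j) ≠ 0 := by
    rw [Kj, if_pos hIf] at hne
    exact hne
  have hp : pup μ₁ j z.1 ≤ pup μ₂ j z.2 := pup_le_pup h₁pos h₂pos hcond j hz
  intro i
  by_cases hij : i = j
  · subst hij
    cases h1 : z'.1 i
    · exact Bool.false_le _
    · cases h2 : z'.2 i
      · rw [h1, h2, qcoup_tf hp] at hq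
        exact absurd rfl hq
      · exact le_rfl
  · rw [hIf.1 i hij, hIf.2 i hij]
    exact hz i

include h₁pos h₂pos in
lemma Kmat_nonneg (z z' : (I → Bool) × (I → Bool)) : 0 ≤ Kmat μ₁ μ₂ z z' :=
  mul_nonneg (by positivity)
    (Finset.sum_nonneg fun j _ => Kj_nonneg h₁pos h₂pos j z z')

include h₁pos in
lemma Kmat_marg1 (z : (I → Bool) × (I → Bool)) (x' : I → Bool) :
    ∑ y' : I → Bool, Kmat μ₁ μ₂ z (x', y') = Pmat μ₁ z.1 x' := by
  simp only [Kmat, Pmat]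
  rw [← Finset.mul_sum, Finset.sum_comm]
  congr 1
  exact Finset.sum_congr rfl fun j _ => Kj_marg1 h₁pos j z x'

include h₂pos in
lemma Kmat_marg2 (z : (I → Bool) × (I → Bool)) (y' : I → Bool) :
    ∑ x' : I → Bool, Kmat μ₁ μ₂ z (x', y') = Pmat μ₂ z.2 y' := by
  simp only [Kmat, Pmat]
  rw [← Finset.mul_sum, Finset.sum_comm]
  congr 1
  exact Finset.sum_congr rfl fun j _ => Kj_marg2 h₂pos j z y'

include h₁pos in
lemma Kmat_rowsum [Nonempty I] (z : (I → Bool) × (I → Bool)) :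
    ∑ z' : (I → Bool) × (I → Bool), Kmat μ₁ μ₂ z z' = 1 := by
  rw [Fintype.sum_prod_type]
  have e1 : ∀ x' ∈ (Finset.univ : Finset (I → Bool)),
      ∑ y' : I → Bool, Kmat μ₁ μ₂ z (x', y') = Pmat μ₁ z.1 x' :=
    fun x' _ => Kmat_marg1 h₁pos z x'
  rw [Finset.sum_congr rfl e1, Pmat_rowsum h₁pos z.1]

include h₁pos h₂pos in
lemma Kmat_mono
    (hcond : ∀ (j : I) (W Z : I → Bool), (∀ i, W i ≤ Z i) →
      μ₁ (Function.update W j true) * μ₂ (Function.update Z j false) ≤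
      μ₂ (Function.update Z j true) * μ₁ (Function.update W j false))
    {z z' : (I → Bool) × (I → Bool)} (hz : ∀ i, z.1 i ≤ z.2 i)
    (hne : Kmat μ₁ μ₂ z z' ≠ 0) : ∀ i, z'.1 i ≤ z'.2 i := by
  have : ∑ j, Kj μ₁ μ₂ j z z' ≠ 0 := by
    intro h0
    rw [Kmat, h0, mul_zero] at hne
    exact hne rfl
  obtain ⟨j, -, hj⟩ := Finset.exists_ne_zero_of_sum_ne_zero this
  exact Kj_mono h₁pos h₂pos hcond j hz hj

end Klem

end Holley

open Holley in
/-- Holley's inequality: if two strictly positive probability measures on `{0,1}^I`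
satisfy the conditional single-coordinate comparison, then `μ₁` is stochastically
dominated by `μ₂`, witnessed by a monotone coupling. -/
theorem holley_inequality {I : Type*} [Fintype I] [DecidableEq I]
    (μ₁ μ₂ : (I → Bool) → ℝ)
    (hμ₁pos : ∀ x, 0 < μ₁ x) (hμ₂pos : ∀ x, 0 < μ₂ x)
    (hμ₁sum : ∑ x : I → Bool, μ₁ x = 1) (hμ₂sum : ∑ x : I → Bool, μ₂ x = 1)
    (hcond : ∀ (j : I) (W Z : I → Bool), (∀ i, W i ≤ Z i) →
      μ₁ (Function.update W j true) * μ₂ (Function.update Z j false) ≤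
      μ₂ (Function.update Z j true) * μ₁ (Function.update W j false)) :
    ∃ κ : (I → Bool) × (I → Bool) → ℝ,
      (∀ p, 0 ≤ κ p) ∧ (∑ p : (I → Bool) × (I → Bool), κ p = 1) ∧
      (∀ x, ∑ y : I → Bool, κ (x, y) = μ₁ x) ∧
      (∀ y, ∑ x : I → Bool, κ (x, y) = μ₂ y) ∧
      (∀ x y, κ (x, y) ≠ 0 → ∀ i, x i ≤ y i) := by
  classical
  cases isEmpty_or_nonempty I with
  | inl hI =>
    refine ⟨fun p => μ₁ p.1 * μ₂ p.2, ?_, ?_, ?_, ?_, ?_⟩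
    · exact fun p => mul_nonneg (hμ₁pos p.1).le (hμ₂pos p.2).le
    · rw [Fintype.sum_prod_type]
      have e1 : ∀ x ∈ (Finset.univ : Finset (I → Bool)),
          ∑ y : I → Bool, μ₁ x * μ₂ y = μ₁ x := by
        intro x _
        rw [← Finset.mul_sum, hμ₂sum, mul_one]
      rw [Finset.sum_congr rfl e1, hμ₁sum]
    · intro x
      show ∑ y : I → Bool, μ₁ x * μ₂ y = μ₁ x
      rw [← Finset.mul_sum, hμ₂sum, mul_one]
    · intro y
      show ∑ x : I → Bool, μ₁ x * μ₂ y = μ₂ y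
      rw [← Finset.sum_mul, hμ₁sum, one_mul]
    · intro x y _ i
      exact isEmptyElim i
  | inr hI =>
    set K := Kmat μ₁ μ₂ with hK
    have hvm : ∀ (w : ((I → Bool) × (I → Bool)) → ℝ) z,
        Matrix.vecMul w K z = ∑ x, w x * K x z := by
      intro w z
      simp [Matrix.vecMul, dotProduct]
    set z₀ : (I → Bool) × (I → Bool) := (fun _ => false, fun _ => true) with hz₀
    set v₀ : ((I → Bool) × (I → Bool)) → ℝ := fun z => if z = z₀ then 1 else 0 with hv₀def
    have hv₀ : v₀ ∈ stdSimplex ℝ ((I → Bool) × (I → Bool)) := by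
      refine ⟨fun z => ?_, ?_⟩
      · show (0:ℝ) ≤ if z = z₀ then 1 else 0
        split_ifs <;> norm_num
      · show (∑ z, if z = z₀ then (1:ℝ) else 0) = 1
        simp
    obtain ⟨κ, hκs, hstat, hsupp⟩ := exists_stationary K
      (Kmat_nonneg hμ₁pos hμ₂pos) (Kmat_rowsum hμ₁pos) v₀ hv₀
    have hvanish : ∀ (m : ℕ) (z : (I → Bool) × (I → Bool)),
        ¬(∀ i, z.1 i ≤ z.2 i) → Matrix.vecMul v₀ (K ^ m) z = 0 := by
      intro m
      induction m with
      | zero =>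
        intro z hz
        rw [pow_zero, Matrix.vecMul_one]
        show (if z = z₀ then (1:ℝ) else 0) = 0
        rw [if_neg]
        intro h
        subst h
        exact hz fun i => Bool.false_le _
      | succ m ih =>
        intro z' hz'
        rw [pow_succ, ← Matrix.vecMul_vecMul, hvm]
        apply Finset.sum_eq_zero
        intro z _
        by_cases hzgood : ∀ i, z.1 i ≤ z.2 i
        · have hK0 : K z z' = 0 := by
            by_contra hne
            exact hz' (Kmat_mono hμ₁pos hμ₂pos hcond hzgood hne)
          rw [hK0, mul_zero]
        · rw [ih z hzgood, zero_mul]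
    have hmono : ∀ x y, κ (x, y) ≠ 0 → ∀ i, x i ≤ y i := by
      intro x y hne
      by_contra hnot
      exact hne (hsupp (x, y) fun m => hvanish m (x, y) hnot)
    have hπ₁ : ∀ x, ∑ y : I → Bool, κ (x, y) = μ₁ x := by
      have hstat₁ : ∀ x', ∑ x : I → Bool, (∑ y : I → Bool, κ (x, y)) * Pmat μ₁ x x'
          = ∑ y : I → Bool, κ (x', y) := by
        intro x'
        have e1 : ∀ y' ∈ (Finset.univ : Finset (I → Bool)),
            κ (x', y') = ∑ z, κ z * K z (x', y') := fun y' _ => (hstat (x', y')).symm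
        rw [Finset.sum_congr rfl e1, Finset.sum_comm]
        have e2 : ∀ z ∈ (Finset.univ : Finset ((I → Bool) × (I → Bool))),
            ∑ y' : I → Bool, κ z * K z (x', y') = κ z * Pmat μ₁ z.1 x' := by
          intro z _
          rw [← Finset.mul_sum, Kmat_marg1 hμ₁pos z x']
        rw [Finset.sum_congr rfl e2, Fintype.sum_prod_type]
        exact (Finset.sum_congr rfl fun x _ => by rw [Finset.sum_mul]).symm
      have := stationary_eq μ₁ hμ₁pos hμ₁sum (fun x => ∑ y : I → Bool, κ (x, y))
        hstat₁ (by
          show ∑ x : I → Bool, ∑ y : I → Bool, κ (x, y) = 1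
          rw [← Fintype.sum_prod_type]
          exact hκs.2)
      exact fun x => congrFun this x
    have hπ₂ : ∀ y, ∑ x : I → Bool, κ (x, y) = μ₂ y := by
      have hstat₂ : ∀ y', ∑ y : I → Bool, (∑ x : I → Bool, κ (x, y)) * Pmat μ₂ y y'
          = ∑ x : I → Bool, κ (x, y') := by
        intro y'
        have e1 : ∀ x' ∈ (Finset.univ : Finset (I → Bool)),
            κ (x', y') = ∑ z, κ z * K z (x', y') := fun x' _ => (hstat (x', y')).symm
        rw [Finset.sum_congr rfl e1, Finset.sum_comm]
        have e2 : ∀ z ∈ (Finset.univ : Finset ((I → Bool) × (I → Bool))),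
            ∑ x' : I → Bool, κ z * K z (x', y') = κ z * Pmat μ₂ z.2 y' := by
          intro z _
          rw [← Finset.mul_sum, Kmat_marg2 hμ₂pos z y']
        rw [Finset.sum_congr rfl e2, Fintype.sum_prod_type]
        rw [Finset.sum_comm]
        exact (Finset.sum_congr rfl fun y _ => by rw [Finset.sum_mul]).symm
      have := stationary_eq μ₂ hμ₂pos hμ₂sum (fun y => ∑ x : I → Bool, κ (x, y))
        hstat₂ (by
          show ∑ y : I → Bool, ∑ x : I → Bool, κ (x, y) = 1
          rw [Finset.sum_comm, ← Fintype.sum_prod_type]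
          exact hκs.2)
      exact fun y => congrFun this y
    exact ⟨κ, hκs.1, hκs.2, hπ₁, hπ₂, hmono⟩
end

section
/- Let E and F be finite sets, q ≥ 1 a natural number, δ : (F → Z/qZ) → (E → Z/qZ) an additive group homomorphism, and p ∈ (0,1). Define a probability measure μ on subsets of E by μ(P) ∝ p^{|P|}·(1-p)^{|E|-|P|}·N(P), where N(P) = |{f : F → Z/qZ : (δ f)(σ) = 0 for all σ ∈ P}|. Then μ is positively associated: for any two increasing families A, B of subsets of E, μ(A ∩ B) ≥ μ(A)·μ(B). -/
/-- In a finite additive commutative group, `|H|·|K| = |H ⊓ K|·|H ⊔ K|`. -/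
lemma aux_card_inf_mul_card_sup {G : Type*} [AddCommGroup G] [Finite G]
    (H K : AddSubgroup G) :
    Nat.card H * Nat.card K =
      Nat.card (H ⊓ K : AddSubgroup G) * Nat.card (H ⊔ K : AddSubgroup G) := by
  have h1 : Nat.card (H ⊓ K : AddSubgroup G) * K.relIndex H = Nat.card H := by
    have e : Nat.card ((K ⊓ H).addSubgroupOf H) = Nat.card (H ⊓ K : AddSubgroup G) := by
      rw [Nat.card_congr (AddSubgroup.addSubgroupOfEquivOfLe
        (inf_le_right : K ⊓ H ≤ H)).toEquiv, inf_comm]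
    have := AddSubgroup.card_mul_index ((K ⊓ H).addSubgroupOf H)
    rw [e] at this
    rwa [← AddSubgroup.inf_relIndex_right K H]
  have h2 : Nat.card K * K.relIndex (H ⊔ K) = Nat.card (H ⊔ K : AddSubgroup G) := by
    have e : Nat.card (K.addSubgroupOf (H ⊔ K)) = Nat.card K :=
      Nat.card_congr (AddSubgroup.addSubgroupOfEquivOfLe
        (le_sup_right : K ≤ H ⊔ K)).toEquiv
    have := AddSubgroup.card_mul_index (K.addSubgroupOf (H ⊔ K))
    rwa [e] at this
  have h3 : K.relIndex (H ⊔ K) = K.relIndex H := AddSubgroup.relIndex_sup_right H K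
  rw [← h1, ← h2, h3]
  ring

/-- Positive association of the plaquette random-cluster measure
`μ(P) ∝ p^{|P|}(1-p)^{|E|-|P|}·N(P)` where `N(P)` counts cochains `f` with
`δf` vanishing on `P`: for increasing families `A`, `B` of subsets of `E`,
`μ(A ∩ B) ≥ μ(A)·μ(B)`. -/
theorem prcm_positive_association {E F : Type*} [Fintype E] [Fintype F] [DecidableEq E]
    (q : ℕ) (hq : 1 ≤ q)
    (δ : (F → ZMod q) →+ (E → ZMod q))
    (p : ℝ) (hp0 : 0 < p) (hp1 : p < 1)
    (μ : Finset E → ℝ)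
    (hsum : ∑ P : Finset E, μ P = 1)
    (hprop : ∃ c : ℝ, 0 < c ∧ ∀ P : Finset E,
      μ P = c * p ^ P.card * (1 - p) ^ (Fintype.card E - P.card) *
        (Nat.card {f : F → ZMod q | ∀ σ ∈ P, δ f σ = 0} : ℝ))
    (A B : Finset (Finset E))
    (hA : ∀ P ∈ A, ∀ P' : Finset E, P ⊆ P' → P' ∈ A)
    (hB : ∀ P ∈ B, ∀ P' : Finset E, P ⊆ P' → P' ∈ B) :
    (∑ P ∈ A, μ P) * (∑ P ∈ B, μ P) ≤ ∑ P ∈ A ∩ B, μ P := by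
  classical
  haveI : NeZero q := ⟨by omega⟩
  obtain ⟨c, hc, hμ⟩ := hprop
  -- the subgroup of cochains vanishing on P
  set G : Finset E → AddSubgroup (F → ZMod q) := fun P =>
    { carrier := {f | ∀ σ ∈ P, δ f σ = 0}
      zero_mem' := by simp
      add_mem' := by
        intro a b ha hb σ hσ
        simp [map_add, ha σ hσ, hb σ hσ]
      neg_mem' := by
        intro a ha σ hσ
        simp [map_neg, ha σ hσ] } with hG
  have hN : ∀ P : Finset E,
      Nat.card {f : F → ZMod q | ∀ σ ∈ P, δ f σ = 0} = Nat.card (G P) := fun _ => rfl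
  -- N is log-supermodular
  have hNsup : ∀ a b : Finset E,
      Nat.card (G a) * Nat.card (G b) ≤ Nat.card (G (a ∩ b)) * Nat.card (G (a ∪ b)) := by
    intro a b
    have hinf : G a ⊓ G b = G (a ∪ b) := by
      ext f
      simp only [hG, AddSubgroup.mem_inf, AddSubgroup.mem_mk, Set.mem_setOf_eq,
        Finset.mem_union]
      constructor
      · rintro ⟨h1, h2⟩ σ (h | h)
        · exact h1 σ h
        · exact h2 σ h
      · exact fun h => ⟨fun σ hσ => h σ (Or.inl hσ), fun σ hσ => h σ (Or.inr hσ)⟩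
    have hsup : G a ⊔ G b ≤ G (a ∩ b) := by
      refine sup_le ?_ ?_ <;>
      · intro f hf σ hσ
        exact hf σ (by simp only [Finset.mem_inter] at hσ; tauto)
    calc Nat.card (G a) * Nat.card (G b)
        = Nat.card (G a ⊓ G b : AddSubgroup (F → ZMod q)) *
            Nat.card (G a ⊔ G b : AddSubgroup (F → ZMod q)) :=
          aux_card_inf_mul_card_sup _ _
      _ ≤ Nat.card (G (a ∩ b)) * Nat.card (G (a ∪ b)) := by
          rw [hinf, Nat.mul_comm]
          exact Nat.mul_le_mul (AddSubgroup.card_le_of_le hsup) le_rfl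
  -- μ is log-supermodular
  have hlog : ∀ a b : Finset E, μ a * μ b ≤ μ (a ⊓ b) * μ (a ⊔ b) := by
    intro a b
    rw [hμ a, hμ b, hμ (a ⊓ b), hμ (a ⊔ b), hN, hN, hN, hN]
    have h1p : (0 : ℝ) < 1 - p := by linarith
    have hcard : (a ⊓ b).card + (a ⊔ b).card = a.card + b.card := by
      rw [Finset.inf_eq_inter, Finset.sup_eq_union]
      have := Finset.card_union_add_card_inter a b
      omega
    have e1 : p ^ a.card * p ^ b.card = p ^ (a ⊓ b).card * p ^ (a ⊔ b).card := by
      rw [← pow_add, ← pow_add]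
      congr 1
      omega
    have e2 : (1 - p) ^ (Fintype.card E - a.card) * (1 - p) ^ (Fintype.card E - b.card) =
        (1 - p) ^ (Fintype.card E - (a ⊓ b).card) *
          (1 - p) ^ (Fintype.card E - (a ⊔ b).card) := by
      rw [← pow_add, ← pow_add]
      congr 1
      have h1 := Finset.card_le_univ a
      have h2 := Finset.card_le_univ b
      have h3 := Finset.card_le_univ (a ⊓ b)
      have h4 := Finset.card_le_univ (a ⊔ b)
      omega
    have key : (Nat.card (G a) : ℝ) * Nat.card (G b) ≤
        Nat.card (G (a ⊓ b)) * Nat.card (G (a ⊔ b)) := by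
      rw [Finset.inf_eq_inter, Finset.sup_eq_union]
      exact_mod_cast hNsup a b
    calc c * p ^ a.card * (1 - p) ^ (Fintype.card E - a.card) * (Nat.card (G a) : ℝ) *
          (c * p ^ b.card * (1 - p) ^ (Fintype.card E - b.card) * (Nat.card (G b) : ℝ))
        = (c * c * (p ^ a.card * p ^ b.card) *
            ((1 - p) ^ (Fintype.card E - a.card) * (1 - p) ^ (Fintype.card E - b.card))) *
            ((Nat.card (G a) : ℝ) * Nat.card (G b)) := by ring
      _ ≤ (c * c * (p ^ (a ⊓ b).card * p ^ (a ⊔ b).card) *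
            ((1 - p) ^ (Fintype.card E - (a ⊓ b).card) *
              (1 - p) ^ (Fintype.card E - (a ⊔ b).card))) *
            ((Nat.card (G (a ⊓ b)) : ℝ) * Nat.card (G (a ⊔ b))) := by
          rw [← e1, ← e2]
          exact mul_le_mul_of_nonneg_left key (by positivity)
      _ = c * p ^ (a ⊓ b).card * (1 - p) ^ (Fintype.card E - (a ⊓ b).card) *
            (Nat.card (G (a ⊓ b)) : ℝ) *
            (c * p ^ (a ⊔ b).card * (1 - p) ^ (Fintype.card E - (a ⊔ b).card) *
              (Nat.card (G (a ⊔ b)) : ℝ)) := by ring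
  -- nonnegativity of μ
  have hμ0 : 0 ≤ μ := by
    intro P
    rw [hμ P]
    have h1p : (0 : ℝ) < 1 - p := by linarith
    positivity
  -- indicator functions
  set f : Finset E → ℝ := fun s => if s ∈ A then 1 else 0 with hf
  set g : Finset E → ℝ := fun s => if s ∈ B then 1 else 0 with hg
  have hf0 : 0 ≤ f := fun s => by by_cases h : s ∈ A <;> simp [hf, h]
  have hg0 : 0 ≤ g := fun s => by by_cases h : s ∈ B <;> simp [hg, h]
  have hfm : Monotone f := by
    intro s t hst
    by_cases h : s ∈ A
    · simp [hf, h, hA s h t hst]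
    · simp only [hf, h, if_false]
      exact hf0 t
  have hgm : Monotone g := by
    intro s t hst
    by_cases h : s ∈ B
    · simp [hg, h, hB s h t hst]
    · simp only [hg, h, if_false]
      exact hg0 t
  have := fkg (f := f) (g := g) (μ := μ) hμ0 hf0 hg0 hfm hgm hlog
  have eA : ∑ s : Finset E, μ s * f s = ∑ P ∈ A, μ P := by
    simp only [hf, mul_ite, mul_one, mul_zero]
    rw [Finset.sum_ite_mem, Finset.univ_inter]
  have eB : ∑ s : Finset E, μ s * g s = ∑ P ∈ B, μ P := by
    simp only [hg, mul_ite, mul_one, mul_zero]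
    rw [Finset.sum_ite_mem, Finset.univ_inter]
  have eAB : ∑ s : Finset E, μ s * (f s * g s) = ∑ P ∈ A ∩ B, μ P := by
    have : ∀ s : Finset E, μ s * (f s * g s) = if s ∈ A ∩ B then μ s else 0 := by
      intro s
      by_cases h1 : s ∈ A <;> by_cases h2 : s ∈ B <;>
        simp [hf, hg, h1, h2, Finset.mem_inter]
    rw [Finset.sum_congr rfl fun s _ => this s, Finset.sum_ite_mem, Finset.univ_inter]
  rw [eA, eB, eAB, hsum, one_mul] at this
  exact this
end

section
/- Let E and F be finite sets, q ≥ 1 a natural number, δ : (F → Z/qZ) → (E → Z/qZ) any function, β ≥ 0, and p = 1 - e^{-β}. For f : F → Z/qZ and P ⊆ E define κ(f,P) = ∏_{σ ∈ E} ((1-p)·1[σ ∉ P] + p·1[σ ∈ P and (δ f)(σ) = 0]). Then: (i) for every f, Σ_{P ⊆ E} κ(f,P) = e^{-β|E|}·e^{-β H(f)}, where H(f) = -|{σ ∈ E : (δ f)(σ) = 0}|; and (ii) for every P ⊆ E, Σ_{f : F → Z/qZ} κ(f,P) = p^{|P|}·(1-p)^{|E|-|P|}·|{f : F → Z/qZ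 : (δ f)(σ) = 0 for all σ ∈ P}|. -/
/-- The Edwards–Sokal-type coupling of Potts lattice gauge theory and the
plaquette random-cluster model: with `p = 1 - e^{-β}` and
`κ(f,P) = ∏_σ ((1-p)·1[σ∉P] + p·1[σ∈P, δf(σ)=0])`,
(i) the `f`-marginal is `e^{-β|E|}·e^{-βH(f)}` with `H(f) = -|{σ : δf(σ)=0}|`, and
(ii) the `P`-marginal is `p^{|P|}(1-p)^{|E|-|P|}·|{f : δf vanishes on P}|`. -/
theorem edwards_sokal_coupling_marginals {E F : Type*} [Fintype E] [Fintype F] [DecidableEq E] [DecidableEq F]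
    (q : ℕ) [NeZero q]
    (δ : (F → ZMod q) → (E → ZMod q))
    (β : ℝ) (hβ : 0 ≤ β) (p : ℝ) (hp : p = 1 - Real.exp (-β))
    (κ : (F → ZMod q) → Finset E → ℝ)
    (hκ : ∀ f P, κ f P = ∏ σ : E,
      ((1 - p) * (if σ ∈ P then 0 else 1) + p * (if σ ∈ P ∧ δ f σ = 0 then 1 else 0))) :
    (∀ f : F → ZMod q,
      ∑ P : Finset E, κ f P =
        Real.exp (-β * (Fintype.card E : ℝ)) *
          Real.exp (-β * (-(((Finset.univ.filter fun σ : E => δ f σ = 0).card : ℝ))))) ∧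
    (∀ P : Finset E,
      ∑ f : F → ZMod q, κ f P =
        p ^ P.card * (1 - p) ^ (Fintype.card E - P.card) *
          (Nat.card {f : F → ZMod q | ∀ σ ∈ P, δ f σ = 0} : ℝ)) := by
  have hκ' : ∀ f P, κ f P =
      (∏ σ ∈ P, (p * (if δ f σ = 0 then (1:ℝ) else 0))) *
        (1 - p) ^ (Fintype.card E - P.card) := by
    intro f P
    rw [hκ, ← Finset.prod_mul_prod_compl P]
    congr 1
    · exact Finset.prod_congr rfl fun σ hσ => by simp [hσ]
    · rw [Finset.prod_congr rfl (fun σ hσ => ?_), Finset.prod_const,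
        Finset.card_compl]
      simp only [Finset.mem_compl] at hσ
      simp [hσ]
  constructor
  · intro f
    have h1 : ∑ P : Finset E, κ f P =
        ∏ σ : E, ((p * (if δ f σ = 0 then (1:ℝ) else 0)) + (1 - p)) := by
      rw [Finset.prod_add, ← Finset.powerset_univ]
      refine Finset.sum_congr rfl fun P hP => ?_
      rw [hκ' f P]
      congr 1
      rw [Finset.prod_const, Finset.card_sdiff_of_subset (Finset.subset_univ P),
        Finset.card_univ]
    have h2 : ∀ σ : E, (p * (if δ f σ = 0 then (1:ℝ) else 0)) + (1 - p) =
        if δ f σ = 0 then 1 else Real.exp (-β) := by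
      intro σ
      split <;> simp [hp] <;> ring
    rw [h1]
    simp_rw [h2]
    rw [Finset.prod_ite, Finset.prod_const_one, one_mul, Finset.prod_const]
    set N := (Finset.univ.filter fun σ : E => δ f σ = 0).card with hN
    have hsum : N + (Finset.univ.filter fun σ : E => ¬ δ f σ = 0).card
        = Fintype.card E := by
      rw [hN]
      simpa using Finset.card_filter_add_card_filter_not
        (s := (Finset.univ : Finset E)) (p := fun σ : E => δ f σ = 0)
    rw [← Real.exp_add, ← Real.exp_nat_mul]
    congr 1
    have : ((Finset.univ.filter fun σ : E => ¬ δ f σ = 0).card : ℝ)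
        = (Fintype.card E : ℝ) - N := by
      rw [← hsum]; push_cast; ring
    rw [this]; ring
  · intro P
    have h3 : ∀ f : F → ZMod q, κ f P =
        (p ^ P.card * (1 - p) ^ (Fintype.card E - P.card)) *
          (if ∀ σ ∈ P, δ f σ = 0 then (1:ℝ) else 0) := by
      intro f
      rw [hκ' f P, Finset.prod_mul_distrib, Finset.prod_const, Finset.prod_boole]
      ring
    simp_rw [h3]
    rw [← Finset.mul_sum, Finset.sum_boole]
    congr 1
    have : Nat.card {f : F → ZMod q | ∀ σ ∈ P, δ f σ = 0}
        = (Finset.univ.filter fun f : F → ZMod q => ∀ σ ∈ P, δ f σ = 0).card := by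
      rw [Nat.card_eq_fintype_card]
      convert Fintype.card_subtype (fun f : F → ZMod q => ∀ σ ∈ P, δ f σ = 0)
      exact Iff.rfl
    rw [this]
end
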